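/- (Atomicity, order-theoretic core.) Let Op be a finite type of operations, T a linearly ordered type of timestamps, ts : Op → T the timestamp of each operation, W : Op → Prop a (decidable) predicate marking the write operations, and prec a strict partial order on Op (irreflexive and transitive, the real-time precedence of the history). Assume: (h1) whenever prec o o', then ts o ≤ ts o'; (h2) whenever prec o o' and o' is a write, then ts o < ts o'; (h3) distinct writes have distinct timestamps. Then there exists a strict linear order lt on Op such that: (c1) prec o o' implies lt o o'; (c2) ts o < ts o' implies lt o o'; (c3) if ts o = ts o', o is a write and o' is not a write, then lt o o'. Consequently, (c4) for every non-write operation r (a read) such that some write w satisfies ts w = ts r, w precedes r in lt and no write lies strictly between w and r in lt; i.e., every read returns the value of the latest preceding write in the constructed sequential order, which also preserves the real-time order. -/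

import Mathlib

/-- **Atomicity, order-theoretic core.** Let `Op` be a finite type of
operations, `T` a linearly ordered type of timestamps, `ts : Op → T`, `W : Op → Prop`
a decidable predicate marking the writes, and `prec` a strict partial order on `Op`
(the real-time precedence). Assume:
(h1) `prec o o'` implies `ts o ≤ ts o'`;
(h2) `prec o o'` and `W o'` imply `ts o < ts o'`;
(h3) distinct writes have distinct timestamps.
Then there is a strict linear order `lt` on `Op` such that:
(c1) `prec o o'` implies `lt o o'`;
(c2) `ts o < ts o'` implies `lt o o'`;
(c3) if `ts o = ts o'`, `o` is a write and `o'` is not, then `lt o o'`;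
and consequently (c4) every non-write (read) `r` whose timestamp equals that of some
write `w` is placed after `w` with no write strictly between `w` and `r`: every read
returns the value of the latest preceding write in the constructed sequential order,
which also preserves the real-time order. -/
theorem atomicity_linearization {Op T : Type*} [Fintype Op] [LinearOrder T]
    (ts : Op → T) (W : Op → Prop) [DecidablePred W]
    (prec : Op → Op → Prop)
    (hirr : ∀ o, ¬ prec o o)
    (htrans : ∀ o₁ o₂ o₃, prec o₁ o₂ → prec o₂ o₃ → prec o₁ o₃)
    (h1 : ∀ o o', prec o o' → ts o ≤ ts o')
    (h2 : ∀ o o', prec o o' → W o' → ts o < ts o')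
    (h3 : ∀ o o', W o → W o' → o ≠ o' → ts o ≠ ts o') :
    ∃ lt : Op → Op → Prop, IsStrictTotalOrder Op lt ∧
      (∀ o o', prec o o' → lt o o') ∧
      (∀ o o', ts o < ts o' → lt o o') ∧
      (∀ o o', ts o = ts o' → W o → ¬ W o' → lt o o') ∧
      (∀ r, ¬ W r → ∀ w, W w → ts w = ts r →
        lt w r ∧ ∀ w', W w' → ¬ (lt w w' ∧ lt w' r)) := by
  -- the strict "priority" order
  set p : Op → Op → Prop := fun o o' =>
    ts o < ts o' ∨ (ts o = ts o' ∧ ((W o ∧ ¬ W o') ∨ prec o o')) with hp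
  have ptrans : ∀ a b c, p a b → p b c → p a c := by
    rintro a b c (hab | ⟨hab, hab2⟩) (hbc | ⟨hbc, hbc2⟩)
    · exact Or.inl (hab.trans hbc)
    · exact Or.inl (hbc ▸ hab)
    · exact Or.inl (hab ▸ hbc)
    · refine Or.inr ⟨hab.trans hbc, ?_⟩
      rcases hab2 with ⟨hWa, hnWb⟩ | hpab
      · rcases hbc2 with ⟨hWb, _⟩ | hpbc
        · exact absurd hWb hnWb
        · have : ¬ W c := fun hWc => absurd (h2 _ _ hpbc hWc) (by simp [hbc])
          exact Or.inl ⟨hWa, this⟩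
      · rcases hbc2 with ⟨hWb, _⟩ | hpbc
        · exact absurd (h2 _ _ hpab hWb) (by simp [hab])
        · exact Or.inr (htrans _ _ _ hpab hpbc)
  have pirr : ∀ a, ¬ p a a := by
    rintro a (h | ⟨_, ⟨hw, hnw⟩ | h⟩)
    · exact lt_irrefl _ h
    · exact hnw hw
    · exact hirr _ h
  have pasym : ∀ a b, p a b → ¬ p b a := fun a b hab hba =>
    pirr a (ptrans _ _ _ hab hba)
  -- reflexive closure is a partial order
  let r : Op → Op → Prop := fun o o' => p o o' ∨ o = o'
  haveI : IsPartialOrder Op r := {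
    refl := fun a => Or.inr rfl
    trans := by
      rintro a b c (hab | rfl) (hbc | rfl)
      · exact Or.inl (ptrans _ _ _ hab hbc)
      · exact Or.inl hab
      · exact Or.inl hbc
      · exact Or.inr rfl
    antisymm := by
      rintro a b (hab | rfl) (hba | hba)
      · exact absurd hba (pasym _ _ hab)
      · exact hba.symm
      · rfl
      · rfl }
  obtain ⟨s, hs, hrs⟩ := extend_partialOrder r
  refine ⟨fun o o' => s o o' ∧ o ≠ o', ?_, ?_, ?_, ?_, ?_⟩
  · refine { trichotomous := ?_, irrefl := fun a h => h.2 rfl, trans := ?_ }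
    · intro a b hnab hnba
      by_contra hab
      rcases hs.total a b with h | h
      · exact hnab ⟨h, hab⟩
      · exact hnba ⟨h, Ne.symm hab⟩
    · rintro a b c ⟨hab, hab'⟩ ⟨hbc, hbc'⟩
      refine ⟨hs.trans _ _ _ hab hbc, fun h => ?_⟩
      subst h
      exact hab' (hs.antisymm _ _ hab hbc)
  · -- c1
    intro o o' h
    have hpo : p o o' := by
      rcases lt_or_eq_of_le (h1 _ _ h) with ht | ht
      · exact Or.inl ht
      · exact Or.inr ⟨ht, Or.inr h⟩
    exact ⟨hrs _ _ (Or.inl hpo), fun he => pirr o (he ▸ hpo)⟩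
  · -- c2
    intro o o' h
    have hpo : p o o' := Or.inl h
    exact ⟨hrs _ _ (Or.inl hpo), fun he => pirr o (he ▸ hpo)⟩
  · -- c3
    intro o o' h hw hnw
    have hpo : p o o' := Or.inr ⟨h, Or.inl ⟨hw, hnw⟩⟩
    exact ⟨hrs _ _ (Or.inl hpo), fun he => pirr o (he ▸ hpo)⟩
  · -- c4
    intro r' hnr w hw hts
    have hpwr : p w r' := Or.inr ⟨hts, Or.inl ⟨hw, hnr⟩⟩
    have hltwr : s w r' ∧ w ≠ r' :=
      ⟨hrs _ _ (Or.inl hpwr), fun he => pirr w (he ▸ hpwr)⟩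
    refine ⟨hltwr, ?_⟩
    rintro w' hw' ⟨⟨hsw, hnew⟩, ⟨hsr, hner⟩⟩
    -- ts w ≤ ts w'
    have h1' : ¬ ts w' < ts w := fun hlt => by
      have : s w' w := hrs _ _ (Or.inl (Or.inl hlt))
      exact hnew (hs.antisymm _ _ hsw this)
    have h2' : ¬ ts r' < ts w' := fun hlt => by
      have : s r' w' := hrs _ _ (Or.inl (Or.inl hlt))
      exact hner (hs.antisymm _ _ hsr this)
    have : ts w' = ts w :=
      le_antisymm (hts ▸ le_of_not_gt h2') (le_of_not_gt h1')
    exact h3 _ _ hw' hw (Ne.symm hnew) this
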